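/- Let L₁, L₂ ⊆ Σ* be nonempty languages and # a symbol not in Σ. Then η(L₁#L₂) = max(η(L₁), η(L₂)), where L₁#L₂ = {u#v | u ∈ L₁, v ∈ L₂} ⊆ (Σ ∪ {#})*. -/

import Mathlib

open Filter

/-- The `n`-th Myhill–Nerode approximation: `u ~ v` iff all witnesses of length at most `n`
agree. -/
def thetaN {α : Type*} (L : Set (List α)) (n : ℕ) (u v : List α) : Prop :=
  ∀ w : List α, w.length ≤ n → ((u ++ w) ∈ L ↔ (v ++ w) ∈ L)

/-- The index (number of classes) of `thetaN L n`. -/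
noncomputable def indexN {α : Type*} (L : Set (List α)) (n : ℕ) : ℕ :=
  Nat.card (Quot (thetaN L n))

/-- Topological entropy of a language, with values in `[0,∞]`. -/
noncomputable def entropy {α : Type*} (L : Set (List α)) : ENNReal :=
  Filter.limsup (fun n : ℕ => ENNReal.ofReal (Real.logb 2 (indexN L n) / n)) Filter.atTop

section Basic
variable {α : Type*}

lemma thetaN_equiv (L : Set (List α)) (n : ℕ) : Equivalence (thetaN L n) :=
  ⟨fun _ _ _ => Iff.rfl, fun h w hw => (h w hw).symm,
   fun h h' w hw => (h w hw).trans (h' w hw)⟩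

lemma quot_mk_eq_iff (L : Set (List α)) (n : ℕ) {u v : List α} :
    Quot.mk (thetaN L n) u = Quot.mk (thetaN L n) v ↔ thetaN L n u v := by
  rw [Quot.eq, (thetaN_equiv L n).eqvGen_iff]

lemma finite_quot [Finite α] (L : Set (List α)) (n : ℕ) : Finite (Quot (thetaN L n)) := by
  have : Finite {w : List α // w.length ≤ n} := (List.finite_length_le α n)
  let F : Quot (thetaN L n) → ({w : List α // w.length ≤ n} → Prop) :=
    Quot.lift (fun u => fun w => (u ++ w.1) ∈ L) (by
      intro u v h
      funext w
      exact propext (h w.1 w.2))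
  have hF : Function.Injective F := by
    intro a b
    induction a using Quot.ind
    induction b using Quot.ind
    rename_i u v
    intro h
    refine Quot.sound (fun w hw => ?_)
    have := congrFun h ⟨w, hw⟩
    exact iff_of_eq this
  exact Finite.of_injective F hF

lemma indexN_pos [Finite α] (L : Set (List α)) (n : ℕ) : 0 < indexN L n := by
  have := finite_quot L n
  have : Nonempty (Quot (thetaN L n)) := ⟨Quot.mk _ []⟩
  exact Nat.card_pos

end Basic

section Comb
variable {α : Type*}

/-- Uniqueness of first-`none` split. -/
lemma split_unique : ∀ (x u : List α) (t s : List (Option α)),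
    x.map some ++ none :: t = u.map some ++ none :: s → x = u ∧ t = s := by
  intro x
  induction x with
  | nil =>
    intro u t s h
    cases u with
    | nil => simpa using h
    | cons b u' => simp at h
  | cons a x' ih =>
    intro u t s h
    cases u with
    | nil => simp at h
    | cons b u' =>
      simp only [List.map_cons, List.cons_append, List.cons.injEq, Option.some.injEq] at h
      obtain ⟨rfl, h2⟩ := h
      obtain ⟨rfl, rfl⟩ := ih u' t s h2
      exact ⟨rfl, rfl⟩

lemma decomp (z : List (Option α)) :
    (∃ x : List α, z = x.map some) ∨ ∃ (x : List α) (t : List (Option α)),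
      z = x.map some ++ none :: t := by
  induction z with
  | nil => exact Or.inl ⟨[], rfl⟩
  | cons a z' ih =>
    cases a with
    | none => exact Or.inr ⟨[], z', rfl⟩
    | some b =>
      rcases ih with ⟨x, rfl⟩ | ⟨x, t, rfl⟩
      · exact Or.inl ⟨b :: x, rfl⟩
      · exact Or.inr ⟨b :: x, t, rfl⟩

variable (L₁ L₂ : Set (List α))

/-- The marked concatenation language. -/
def mconcat : Set (List (Option α)) :=
  {w : List (Option α) | ∃ u ∈ L₁, ∃ v ∈ L₂, w = u.map some ++ none :: v.map some}

lemma mem_mconcat_iff (x : List α) (t : List (Option α)) :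
    x.map some ++ none :: t ∈ mconcat L₁ L₂ ↔ x ∈ L₁ ∧ ∃ y ∈ L₂, t = y.map some := by
  constructor
  · rintro ⟨u, hu, v, hv, h⟩
    obtain ⟨rfl, rfl⟩ := split_unique x u t (v.map some) h
    exact ⟨hu, v, hv, rfl⟩
  · rintro ⟨hx, y, hy, rfl⟩
    exact ⟨x, hx, y, hy, rfl⟩

lemma map_some_not_mem_mconcat (x : List α) : x.map some ∉ mconcat L₁ L₂ := by
  rintro ⟨u, hu, v, hv, h⟩
  have : none ∈ x.map some := h ▸ (by simp : (none : Option α) ∈ u.map some ++ none :: v.map some)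
  simp at this

end Comb

section Index
variable {α : Type*} [Fintype α] (L₁ L₂ : Set (List α))

lemma mem_cons_map (x y : List α) :
    x.map some ++ none :: y.map some ∈ mconcat L₁ L₂ ↔ x ∈ L₁ ∧ y ∈ L₂ := by
  rw [mem_mconcat_iff]
  constructor
  · rintro ⟨hx, y', hy', h⟩
    obtain rfl : y = y' := List.map_injective_iff.mpr (Option.some_injective α) h
    exact ⟨hx, hy'⟩
  · rintro ⟨hx, hy⟩
    exact ⟨hx, y, hy, rfl⟩

lemma mem_two_nones (x : List α) (t : List (Option α)) (ht : none ∈ t) :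
    x.map some ++ none :: t ∉ mconcat L₁ L₂ := by
  rw [mem_mconcat_iff]
  rintro ⟨-, y, -, rfl⟩
  simp at ht

lemma indexA {u₀ : List α} (hu₀ : u₀ ∈ L₁) (n : ℕ) :
    indexN L₂ n ≤ indexN (mconcat L₁ L₂) n := by
  set L := mconcat L₁ L₂ with hL
  have := finite_quot L n
  let g : Quot (thetaN L₂ n) → Quot (thetaN L n) :=
    Quot.lift (fun y => Quot.mk _ (u₀.map some ++ none :: y.map some)) (by
      intro y y' h
      refine Quot.sound (fun w hw => ?_)
      rcases decomp w with ⟨w', rfl⟩ | ⟨w₁, t, rfl⟩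
      · have e : ∀ z : List α, (u₀.map some ++ none :: z.map some) ++ w'.map some
            = u₀.map some ++ none :: (z ++ w').map some := by
          intro z; simp
        rw [e, e, mem_cons_map, mem_cons_map]
        have := h w' (by simpa using hw)
        tauto
      · have e : ∀ z : List α, (u₀.map some ++ none :: z.map some) ++ (w₁.map some ++ none :: t)
            = u₀.map some ++ none :: (z.map some ++ (w₁.map some ++ none :: t)) := by
          intro z; simp
        rw [e, e]
        have h2 : ∀ z : List α, (none : Option α) ∈ z.map some ++ (w₁.map some ++ none :: t) := by
          intro z; simp
        exact iff_of_false (mem_two_nones L₁ L₂ _ _ (h2 y)) (mem_two_nones L₁ L₂ _ _ (h2 y')))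
  have hg : Function.Injective g := by
    intro a b
    induction a using Quot.ind with | _ y =>
    induction b using Quot.ind with | _ y' =>
    intro h
    have h' : thetaN L n (u₀.map some ++ none :: y.map some)
        (u₀.map some ++ none :: y'.map some) := (quot_mk_eq_iff L n).mp h
    refine Quot.sound (fun w hw => ?_)
    have := h' (w.map some) (by simpa using hw)
    have e : ∀ z : List α, (u₀.map some ++ none :: z.map some) ++ w.map some
        = u₀.map some ++ none :: (z ++ w).map some := by intro z; simp
    rw [e, e, mem_cons_map, mem_cons_map] at this
    tauto
  exact Nat.card_le_card_of_injective g hg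

lemma indexB {v₀ : List α} (hv₀ : v₀ ∈ L₂) (hmin : ∀ v ∈ L₂, v₀.length ≤ v.length) (m : ℕ) :
    indexN L₁ m ≤ indexN (mconcat L₁ L₂) (m + v₀.length + 1) := by
  set n := m + v₀.length + 1 with hn
  set L := mconcat L₁ L₂ with hL
  have := finite_quot L n
  have key : ∀ x x' : List α, thetaN L₁ m x x' → thetaN L n (x.map some) (x'.map some) := by
    intro x x' h w hw
    rcases decomp w with ⟨w', rfl⟩ | ⟨w₁, t, rfl⟩
    · rw [← List.map_append, ← List.map_append]
      exact iff_of_false (map_some_not_mem_mconcat L₁ L₂ _) (map_some_not_mem_mconcat L₁ L₂ _)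
    · have e : ∀ z : List α, z.map some ++ (w₁.map some ++ none :: t)
          = (z ++ w₁).map some ++ none :: t := by intro z; simp
      rw [e, e, mem_mconcat_iff, mem_mconcat_iff]
      by_cases hy : ∃ y ∈ L₂, t = y.map some
      · obtain ⟨y, hyL, rfl⟩ := hy
        have hlen : w₁.length ≤ m := by
          have h1 : v₀.length ≤ y.length := hmin y hyL
          have h2 : w₁.length + (y.length + 1) ≤ n := by simpa using hw
          omega
        have := h w₁ hlen
        tauto
      · constructor <;> (rintro ⟨-, hex⟩; exact absurd hex hy)
  have inj : ∀ x x' : List α, thetaN L n (x.map some) (x'.map some) → thetaN L₁ m x x' := by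
    intro x x' h w hw
    have := h (w.map some ++ none :: v₀.map some) (by simp; omega)
    have e : ∀ z : List α, z.map some ++ (w.map some ++ none :: v₀.map some)
        = (z ++ w).map some ++ none :: v₀.map some := by intro z; simp
    rw [e, e, mem_cons_map, mem_cons_map] at this
    tauto
  let g : Quot (thetaN L₁ m) → Quot (thetaN L n) :=
    Quot.lift (fun x => Quot.mk _ (x.map some)) (fun x x' h => Quot.sound (key x x' h))
  have hg : Function.Injective g := by
    intro a b
    induction a using Quot.ind with | _ x =>
    induction b using Quot.ind with | _ x' =>
    intro h
    exact Quot.sound (inj x x' ((quot_mk_eq_iff L n).mp h))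
  exact Nat.card_le_card_of_injective g hg

end Index

section Upper
variable {α : Type*} [Fintype α] (L₁ L₂ : Set (List α))

open Classical in
lemma indexC (n : ℕ) :
    indexN (mconcat L₁ L₂) n ≤ indexN L₁ n + indexN L₂ n + 1 := by
  set L := mconcat L₁ L₂ with hL
  have hF1 := finite_quot L₁ n
  have hF2 := finite_quot L₂ n
  have hFL := finite_quot L n
  let P : List (Option α) → Prop := fun z =>
    ∃ p : List α × List α, p.1 ∈ L₁ ∧ z = p.1.map some ++ none :: p.2.map some
  let Q : List (Option α) → Prop := fun z => ∃ x : List α, z = x.map some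
  let G : List (Option α) → (Quot (thetaN L₁ n) ⊕ (Quot (thetaN L₂ n) ⊕ Unit)) := fun z =>
    if h : P z then Sum.inr (Sum.inl (Quot.mk _ h.choose.2))
    else if h' : Q z then Sum.inl (Quot.mk _ h'.choose)
    else Sum.inr (Sum.inr ())
  -- dead words
  have dead : ∀ z, ¬ P z → ¬ Q z → ∀ w : List (Option α), z ++ w ∉ L := by
    intro z hP hQ w hmem
    rcases decomp z with ⟨x, rfl⟩ | ⟨x, t, rfl⟩
    · exact hQ ⟨x, rfl⟩
    · rw [List.append_assoc, List.cons_append, mem_mconcat_iff] at hmem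
      obtain ⟨hx, y, hy, hty⟩ := hmem
      obtain ⟨y₁, y₂, rfl, h1, h2⟩ := List.append_eq_map_iff.mp hty
      exact hP ⟨(x, y₁), hx, by rw [h1]⟩
  have key : ∀ z z', G z = G z' → thetaN L n z z' := by
    intro z z' hG
    by_cases hP : P z <;> by_cases hP' : P z'
    · obtain ⟨hx, hz⟩ := hP.choose_spec
      obtain ⟨hx', hz'⟩ := hP'.choose_spec
      simp only [G, dif_pos hP, dif_pos hP', Sum.inr.injEq, Sum.inl.injEq] at hG
      have h2 : thetaN L₂ n hP.choose.2 hP'.choose.2 := (quot_mk_eq_iff L₂ n).mp hG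
      intro w hw
      rw [hz, hz']
      rcases decomp w with ⟨w', rfl⟩ | ⟨w₁, t, rfl⟩
      · have e : ∀ (a b : List α), (a.map some ++ none :: b.map some) ++ w'.map some
            = a.map some ++ none :: (b ++ w').map some := by intro a b; simp
        rw [e, e, mem_cons_map, mem_cons_map]
        have := h2 w' (by simpa using hw)
        tauto
      · have e : ∀ (a b : List α), (a.map some ++ none :: b.map some) ++ (w₁.map some ++ none :: t)
            = a.map some ++ none :: (b.map some ++ (w₁.map some ++ none :: t)) := by
          intro a b; simp
        rw [e, e]
        have h3 : ∀ b : List α, (none : Option α) ∈ b.map some ++ (w₁.map some ++ none :: t) := by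
          intro b; simp
        exact iff_of_false (mem_two_nones L₁ L₂ _ _ (h3 _)) (mem_two_nones L₁ L₂ _ _ (h3 _))
    · simp only [G, dif_pos hP, dif_neg hP'] at hG
      by_cases hQ' : Q z' <;> simp [dif_pos, dif_neg, hQ'] at hG
    · simp only [G, dif_pos hP', dif_neg hP] at hG
      by_cases hQ : Q z <;> simp [dif_pos, dif_neg, hQ] at hG
    · by_cases hQ : Q z <;> by_cases hQ' : Q z'
      · have hzx := hQ.choose_spec
        have hzx' := hQ'.choose_spec
        simp only [G, dif_neg hP, dif_neg hP', dif_pos hQ, dif_pos hQ', Sum.inl.injEq] at hG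
        have h1 : thetaN L₁ n hQ.choose hQ'.choose := (quot_mk_eq_iff L₁ n).mp hG
        intro w hw
        rw [hzx, hzx']
        rcases decomp w with ⟨w', rfl⟩ | ⟨w₁, t, rfl⟩
        · rw [← List.map_append, ← List.map_append]
          exact iff_of_false (map_some_not_mem_mconcat L₁ L₂ _) (map_some_not_mem_mconcat L₁ L₂ _)
        · have e : ∀ a : List α, a.map some ++ (w₁.map some ++ none :: t)
              = (a ++ w₁).map some ++ none :: t := by intro a; simp
          rw [e, e, mem_mconcat_iff, mem_mconcat_iff]
          have hlen : w₁.length ≤ n := by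
            have : w₁.length + (t.length + 1) ≤ n := by simpa using hw
            omega
          have := h1 w₁ hlen
          tauto
      · simp [G, dif_neg hP, dif_neg hP', dif_pos hQ, dif_neg hQ'] at hG
      · simp [G, dif_neg hP, dif_neg hP', dif_pos hQ', dif_neg hQ] at hG
      · intro w hw
        exact iff_of_false (dead z hP hQ w) (dead z' hP' hQ' w)
  let f : Quot (thetaN L n) → (Quot (thetaN L₁ n) ⊕ (Quot (thetaN L₂ n) ⊕ Unit)) :=
    fun q => G q.out
  have hf : Function.Injective f := by
    intro a b h
    have := key a.out b.out h
    have := Quot.sound this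
    rwa [a.out_eq, b.out_eq] at this
  calc indexN L n ≤ Nat.card (Quot (thetaN L₁ n) ⊕ (Quot (thetaN L₂ n) ⊕ Unit)) :=
        Nat.card_le_card_of_injective f hf
    _ = indexN L₁ n + indexN L₂ n + 1 := by
        rw [Nat.card_sum, Nat.card_sum]
        simp [indexN, add_assoc]

end Upper

-- helper limsup lemmas for ENNReal
lemma limsup_add_const_le (u : ℕ → ENNReal) (c : ENNReal) :
    limsup (fun n => u n + c) atTop ≤ limsup u atTop + c := by
  rw [limsup_eq, limsup_eq, ENNReal.sInf_add]
  refine le_iInf₂ (fun b hb => ?_)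
  exact sInf_le (hb.mono fun n hn => add_le_add_left hn c)

lemma ofreal_logdiv_tendsto (C : ℝ) :
    Tendsto (fun n : ℕ => ENNReal.ofReal (C / n)) atTop (nhds 0) := by
  have h := tendsto_const_div_atTop_nhds_zero_nat C
  have := (ENNReal.continuous_ofReal.tendsto 0).comp h
  simpa [Function.comp_def] using this

lemma limsup_ofreal_logdiv (C : ℝ) :
    limsup (fun n : ℕ => ENNReal.ofReal (C / n)) atTop = 0 :=
  (ofreal_logdiv_tendsto C).limsup_eq

noncomputable def F (a : ℕ → ℕ) (n : ℕ) : ENNReal :=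
  ENNReal.ofReal (Real.logb 2 (a n) / n)

lemma ent_le_ent_of_le (a b : ℕ → ℕ) (ha : ∀ n, 1 ≤ a n) (hab : ∀ n, a n ≤ b n) :
    limsup (F a) atTop ≤ limsup (F b) atTop := by
  refine limsup_le_limsup (Eventually.of_forall fun n => ?_)
  apply ENNReal.ofReal_le_ofReal
  have hA : Real.logb 2 (a n) ≤ Real.logb 2 (b n) :=
    Real.logb_le_logb_of_le one_lt_two (by exact_mod_cast ha n) (by exact_mod_cast hab n)
  have : (0:ℝ) ≤ (n:ℝ)⁻¹ := by positivity
  calc Real.logb 2 (a n) / n = Real.logb 2 (a n) * (n:ℝ)⁻¹ := by ring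
    _ ≤ Real.logb 2 (b n) * (n:ℝ)⁻¹ := mul_le_mul_of_nonneg_right hA this
    _ = Real.logb 2 (b n) / n := by ring

lemma ent_shift_le (a b : ℕ → ℕ) (c : ℕ) (ha : ∀ n, 1 ≤ a n) (hb : ∀ n, 1 ≤ b n)
    (hab : ∀ n, a n ≤ b (n + c)) :
    limsup (F a) atTop ≤ limsup (F b) atTop := by
  set E := limsup (F b) atTop with hEdef
  refine ENNReal.le_of_forall_pos_le_add (fun ε hε hEtop => ?_)
  set t := E.toReal with ht
  have ht0 : 0 ≤ t := ENNReal.toReal_nonneg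
  set δ : ℝ := (ε : ℝ) / (t + 1) with hδ
  have hεR : (0:ℝ) < ε := hε
  have hδpos : (0:ℝ) < δ := div_pos hεR (by linarith)
  have hE : E = ENNReal.ofReal t := (ENNReal.ofReal_toReal hEtop.ne).symm
  have hkey : ENNReal.ofReal δ * E ≤ (ε : ENNReal) := by
    rw [hE, ← ENNReal.ofReal_mul hδpos.le]
    have h1 : δ * t ≤ (ε:ℝ) := by
      rw [hδ, div_mul_eq_mul_div, div_le_iff₀ (by linarith)]
      nlinarith
    calc ENNReal.ofReal (δ * t) ≤ ENNReal.ofReal (ε:ℝ) := ENNReal.ofReal_le_ofReal h1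
      _ = (ε : ENNReal) := ENNReal.ofReal_coe_nnreal
  set N := max 1 ⌈(c:ℝ)/δ⌉₊ with hN
  have hpt : ∀ n ≥ N, F a n ≤ ENNReal.ofReal (1+δ) * F b (n + c) := by
    intro n hn
    have hn1 : 1 ≤ n := le_trans (le_max_left _ _) hn
    have hnpos : (0:ℝ) < n := by exact_mod_cast hn1
    have hncpos : (0:ℝ) < (n:ℝ) + (c:ℝ) := by
      have : (0:ℝ) ≤ c := Nat.cast_nonneg c
      linarith
    have hc : (c:ℝ) ≤ δ * n := by
      have h2 : ((c:ℝ)/δ) ≤ (⌈(c:ℝ)/δ⌉₊ : ℝ) := Nat.le_ceil _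
      have h3 : ((⌈(c:ℝ)/δ⌉₊ : ℕ):ℝ) ≤ (n:ℝ) := by
        exact_mod_cast le_trans (le_max_right 1 _) hn
      have h4 : (c:ℝ)/δ ≤ n := le_trans h2 h3
      calc (c:ℝ) = ((c:ℝ)/δ) * δ := by field_simp
        _ ≤ (n:ℝ) * δ := mul_le_mul_of_nonneg_right h4 hδpos.le
        _ = δ * n := mul_comm _ _
    unfold F
    rw [← ENNReal.ofReal_mul (by linarith : (0:ℝ) ≤ 1 + δ)]
    apply ENNReal.ofReal_le_ofReal
    have hA0 : 0 ≤ Real.logb 2 (a n) := Real.logb_nonneg one_lt_two (by exact_mod_cast ha n)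
    have hAB : Real.logb 2 (a n) ≤ Real.logb 2 (b (n+c)) :=
      Real.logb_le_logb_of_le one_lt_two (by exact_mod_cast ha n) (by exact_mod_cast hab n)
    have hfrac : 1/(n:ℝ) ≤ (1+δ)/((n:ℝ)+(c:ℝ)) := by
      rw [div_le_div_iff₀ hnpos hncpos]
      nlinarith
    calc Real.logb 2 (a n) / n = Real.logb 2 (a n) * (1/(n:ℝ)) := by ring
      _ ≤ Real.logb 2 (b (n+c)) * ((1+δ)/((n:ℝ)+(c:ℝ))) :=
          mul_le_mul hAB hfrac (by positivity) (le_trans hA0 hAB)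
      _ = (1+δ) * (Real.logb 2 (b (n+c)) / ((n+c : ℕ):ℝ)) := by push_cast; ring
  calc limsup (F a) atTop
      ≤ limsup (fun n => ENNReal.ofReal (1+δ) * F b (n+c)) atTop :=
        limsup_le_limsup (eventually_atTop.mpr ⟨N, hpt⟩)
    _ = ENNReal.ofReal (1+δ) * limsup (fun n => F b (n+c)) atTop :=
        ENNReal.limsup_const_mul_of_ne_top ENNReal.ofReal_ne_top
    _ = ENNReal.ofReal (1+δ) * E := by rw [limsup_nat_add (F b) c]
    _ = (1 + ENNReal.ofReal δ) * E := by
        rw [ENNReal.ofReal_add zero_le_one hδpos.le, ENNReal.ofReal_one]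
    _ = E + ENNReal.ofReal δ * E := by ring
    _ ≤ E + ε := add_le_add_right hkey E

lemma ent_upper (a b₁ b₂ : ℕ → ℕ) (ha : ∀ n, 1 ≤ a n) (hb₁ : ∀ n, 1 ≤ b₁ n)
    (hb₂ : ∀ n, 1 ≤ b₂ n) (h : ∀ n, a n ≤ b₁ n + b₂ n + 1) :
    limsup (F a) atTop ≤ max (limsup (F b₁) atTop) (limsup (F b₂) atTop) := by
  have hpt : ∀ n, F a n ≤ ENNReal.ofReal (Real.logb 2 3 / n) + max (F b₁ n) (F b₂ n) := by
    intro n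
    have key : ∀ (bb : ℕ → ℕ), (∀ m, 1 ≤ bb m) → a n ≤ 3 * bb n →
        F a n ≤ ENNReal.ofReal (Real.logb 2 3 / n) + F bb n := by
      intro bb hbb hle
      have hb0 : (0:ℝ) < (bb n : ℝ) := by exact_mod_cast hbb n
      have h1 : Real.logb 2 (a n) ≤ Real.logb 2 (3 * (bb n : ℝ)) := by
        apply Real.logb_le_logb_of_le one_lt_two (by exact_mod_cast ha n)
        exact_mod_cast hle
      have h2 : Real.logb 2 (3 * (bb n : ℝ)) = Real.logb 2 3 + Real.logb 2 (bb n) :=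
        Real.logb_mul (by norm_num) (ne_of_gt hb0)
      have hA : Real.logb 2 (a n) ≤ Real.logb 2 3 + Real.logb 2 (bb n) := h1.trans_eq h2
      have hdiv : Real.logb 2 (a n) / n ≤ Real.logb 2 3 / n + Real.logb 2 (bb n) / n := by
        rw [← add_div]
        have hninv : (0:ℝ) ≤ ((n:ℝ))⁻¹ := by positivity
        calc Real.logb 2 (a n) / n = Real.logb 2 (a n) * ((n:ℝ))⁻¹ := by ring
          _ ≤ (Real.logb 2 3 + Real.logb 2 (bb n)) * ((n:ℝ))⁻¹ :=
              mul_le_mul_of_nonneg_right hA hninv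
          _ = (Real.logb 2 3 + Real.logb 2 (bb n)) / n := by ring
      have hnn1 : (0:ℝ) ≤ Real.logb 2 3 / n :=
        div_nonneg (Real.logb_nonneg one_lt_two (by norm_num)) (Nat.cast_nonneg n)
      have hnn2 : (0:ℝ) ≤ Real.logb 2 (bb n) / n :=
        div_nonneg (Real.logb_nonneg one_lt_two (by exact_mod_cast hbb n)) (Nat.cast_nonneg n)
      calc F a n ≤ ENNReal.ofReal (Real.logb 2 3 / n + Real.logb 2 (bb n) / n) :=
            ENNReal.ofReal_le_ofReal hdiv
        _ = ENNReal.ofReal (Real.logb 2 3 / n) + ENNReal.ofReal (Real.logb 2 (bb n) / n) :=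
            ENNReal.ofReal_add hnn1 hnn2
        _ = ENNReal.ofReal (Real.logb 2 3 / n) + F bb n := rfl
    rcases le_total (b₁ n) (b₂ n) with h12 | h21
    · have h3 : a n ≤ 3 * b₂ n := by have := h n; have := hb₂ n; omega
      exact (key b₂ hb₂ h3).trans (add_le_add_right (le_max_right _ _) _)
    · have h3 : a n ≤ 3 * b₁ n := by have := h n; have := hb₁ n; omega
      exact (key b₁ hb₁ h3).trans (add_le_add_right (le_max_left _ _) _)
  refine ENNReal.le_of_forall_pos_le_add (fun ε hε _ => ?_)
  have h0 : (0:ENNReal) < (ε : ENNReal) := ENNReal.coe_pos.mpr hε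
  have hev : ∀ᶠ n in atTop, ENNReal.ofReal (Real.logb 2 3 / (n:ℕ)) ≤ (ε:ENNReal) :=
    (ofreal_logdiv_tendsto (Real.logb 2 3)).eventually (eventually_le_nhds h0)
  have hev2 : ∀ᶠ n in atTop, F a n ≤ max (F b₁ n) (F b₂ n) + (ε:ENNReal) :=
    hev.mono (fun n hn => (hpt n).trans
      (le_trans (add_le_add_left hn _) (le_of_eq (add_comm _ _))))
  calc limsup (F a) atTop ≤ limsup (fun n => max (F b₁ n) (F b₂ n) + (ε:ENNReal)) atTop :=
        limsup_le_limsup hev2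
    _ ≤ limsup (fun n => max (F b₁ n) (F b₂ n)) atTop + ε := limsup_add_const_le _ _
    _ = max (limsup (F b₁) atTop) (limsup (F b₂) atTop) + ε := by rw [limsup_max]

lemma one_le_indexN {α : Type*} [Finite α] (L : Set (List α)) (n : ℕ) : 1 ≤ indexN L n :=
  indexN_pos L n

theorem entropy_marked_concat {α : Type*} [Fintype α]
    (L₁ L₂ : Set (List α)) (h₁ : L₁.Nonempty) (h₂ : L₂.Nonempty) :
    entropy {w : List (Option α) | ∃ u ∈ L₁, ∃ v ∈ L₂,
        w = u.map some ++ none :: v.map some} =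
      max (entropy L₁) (entropy L₂) := by
  obtain ⟨u₀, hu₀⟩ := h₁
  -- a minimal-length element of L₂
  obtain ⟨v₀, hv₀, hv₀len⟩ : ∃ v₀ ∈ L₂, v₀.length = sInf (List.length '' L₂) := by
    have := Nat.sInf_mem (s := List.length '' L₂) (h₂.image _)
    obtain ⟨v₀, hv₀, hlen⟩ := this
    exact ⟨v₀, hv₀, hlen.symm ▸ rfl⟩
  have hmin : ∀ v ∈ L₂, v₀.length ≤ v.length := by
    intro v hv
    rw [hv₀len]
    exact Nat.sInf_le ⟨v, hv, rfl⟩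
  have hset : {w : List (Option α) | ∃ u ∈ L₁, ∃ v ∈ L₂,
      w = u.map some ++ none :: v.map some} = mconcat L₁ L₂ := rfl
  rw [hset]
  have e1 : entropy (mconcat L₁ L₂)
      = limsup (F (fun n => indexN (mconcat L₁ L₂) n)) atTop := rfl
  have e2 : entropy L₁ = limsup (F (fun n => indexN L₁ n)) atTop := rfl
  have e3 : entropy L₂ = limsup (F (fun n => indexN L₂ n)) atTop := rfl
  refine le_antisymm ?_ (max_le ?_ ?_)
  · rw [e1, e2, e3]
    exact ent_upper _ _ _ (fun n => one_le_indexN _ n) (fun n => one_le_indexN _ n)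
      (fun n => one_le_indexN _ n) (indexC L₁ L₂)
  · rw [e1, e2]
    refine ent_shift_le _ _ (v₀.length + 1) (fun n => one_le_indexN _ n)
      (fun n => one_le_indexN _ n) (fun n => ?_)
    have := indexB L₁ L₂ hv₀ hmin n
    simpa [add_assoc] using this
  · rw [e1, e3]
    exact ent_le_ent_of_le _ _ (fun n => one_le_indexN _ n) (indexA L₁ L₂ hu₀)
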